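/- Let G be a finite group, k a field of characteristic p > 0, and b a block idempotent of kG. For p-subgroups Q ≤ P of G and block idempotents f of kC_G(Q), e of kC_G(P): if there exists a primitive idempotent i of (kG)^P with Br_P(i)e ≠ 0 and Br_Q(i)f ≠ 0, then for every primitive idempotent j of (kG)^P with Br_P(j)e ≠ 0 one has Br_Q(j)f ≠ 0 (i.e., conditions (vi) and (iv) of the containment of Brauer pairs are equivalent, given the existence and uniqueness of f' with (Q,f') ≤ (P,e)). -/

import Mathlib

set_option linter.unusedSectionVars false
set_option linter.unnecessarySimpa false
set_option maxHeartbeats 1000000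


/-- Conjugation by `x ∈ G` on the group algebra. -/
noncomputable def gAct {k G : Type*} [Field k] [Group G] (x : G) (a : MonoidAlgebra k G) :
    MonoidAlgebra k G :=
  MonoidAlgebra.ofCoeff (Finsupp.mapDomain (fun g => x * g * x⁻¹) a.coeff)

/-- The Brauer homomorphism with respect to `P`: projection of `kG` onto the coefficients
supported on the centralizer `C_G(P)`; its image is identified with `kC_G(P)`. -/
noncomputable def Br {k G : Type*} [Field k] [Group G] (P : Subgroup G)
    (a : MonoidAlgebra k G) : MonoidAlgebra k G :=
  @Finsupp.filter G k _ (· ∈ Subgroup.centralizer (P : Set G)) (Classical.decPred _) a.coeff |> MonoidAlgebra.ofCoeff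

/-- `a ∈ kG` is supported in the subgroup `H`; such elements form a subalgebra canonically
isomorphic to `kH`. -/
def SuppIn {k G : Type*} [Field k] [Group G] (H : Subgroup G) (a : MonoidAlgebra k G) : Prop :=
  ∀ g : G, a.coeff g ≠ 0 → g ∈ H

/-- `e` is a block idempotent of `kH` (identified with the elements of `kG` supported in `H`):
`e` is supported in `H`, central in `kH`, a nonzero idempotent, and primitive among central
idempotents of `kH`. -/
def IsBlockOf {k G : Type*} [Field k] [Group G] (H : Subgroup G) (e : MonoidAlgebra k G) : Prop :=
  SuppIn H e ∧ (∀ a : MonoidAlgebra k G, SuppIn H a → a * e = e * a) ∧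
    IsIdempotentElem e ∧ e ≠ 0 ∧
    ∀ c₁ c₂ : MonoidAlgebra k G, SuppIn H c₁ → SuppIn H c₂ →
      (∀ a, SuppIn H a → a * c₁ = c₁ * a) → (∀ a, SuppIn H a → a * c₂ = c₂ * a) →
      IsIdempotentElem c₁ → IsIdempotentElem c₂ → c₁ * c₂ = 0 → e = c₁ + c₂ →
        c₁ = 0 ∨ c₂ = 0

/-- `i` is a primitive idempotent of the fixed-point algebra `(kG)^P`. -/
def IsPrimIdemFixed {k G : Type*} [Field k] [Group G] (P : Subgroup G)
    (i : MonoidAlgebra k G) : Prop :=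
  (∀ x ∈ P, gAct x i = i) ∧ IsIdempotentElem i ∧ i ≠ 0 ∧
    ∀ j₁ j₂ : MonoidAlgebra k G, (∀ x ∈ P, gAct x j₁ = j₁) → (∀ x ∈ P, gAct x j₂ = j₂) →
      IsIdempotentElem j₁ → IsIdempotentElem j₂ → j₁ * j₂ = 0 → j₂ * j₁ = 0 → i = j₁ + j₂ →
        j₁ = 0 ∨ j₂ = 0

/-- The containment `(Q,f) ≤ (P,e)` of `kG`-Brauer pairs: `Q ≤ P` and every primitive idempotent
`i` of `(kG)^P` associated to `(P,e)` (i.e. `e·Br_P(i) = Br_P(i) ≠ 0`) is associated to `(Q,f)`. -/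
def BrauerLE {k G : Type*} [Field k] [Group G] (Q : Subgroup G) (f : MonoidAlgebra k G)
    (P : Subgroup G) (e : MonoidAlgebra k G) : Prop :=
  Q ≤ P ∧ ∀ i : MonoidAlgebra k G, IsPrimIdemFixed P i →
    (e * Br P i = Br P i ∧ Br P i ≠ 0) → (f * Br Q i = Br Q i ∧ Br Q i ≠ 0)

section Aux
variable {k G : Type*} [Field k] [Group G]

lemma Br_apply_mem {P : Subgroup G} {g : G} (hg : g ∈ Subgroup.centralizer (P : Set G))
    (a : MonoidAlgebra k G) : (Br P a).coeff g = a.coeff g := by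
  simp only [Br, MonoidAlgebra.coeff_ofCoeff, Finsupp.filter_apply]; exact if_pos hg

lemma Br_apply_not_mem {P : Subgroup G} {g : G} (hg : g ∉ Subgroup.centralizer (P : Set G))
    (a : MonoidAlgebra k G) : (Br P a).coeff g = 0 := by
  simp only [Br, MonoidAlgebra.coeff_ofCoeff, Finsupp.filter_apply]; exact if_neg hg

lemma SuppIn_Br (P : Subgroup G) (a : MonoidAlgebra k G) :
    SuppIn (Subgroup.centralizer (P : Set G)) (Br P a) := by
  intro g hg
  by_contra h
  exact hg (Br_apply_not_mem h a)

lemma Br_of_suppIn {P : Subgroup G} {a : MonoidAlgebra k G}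
    (ha : SuppIn (Subgroup.centralizer (P : Set G)) a) : Br P a = a := by
  ext g
  by_cases hg : g ∈ Subgroup.centralizer (P : Set G)
  · rw [Br_apply_mem hg]
  · rw [Br_apply_not_mem hg]
    exact ((by_contra fun h => hg (ha g h)) : a.coeff g = 0).symm

lemma Br_add (P : Subgroup G) (a b : MonoidAlgebra k G) :
    Br P (a + b) = Br P a + Br P b := by
  ext g
  by_cases hg : g ∈ Subgroup.centralizer (P : Set G)
  · rw [MonoidAlgebra.coeff_add, Finsupp.add_apply, Br_apply_mem hg, Br_apply_mem hg, Br_apply_mem hg, MonoidAlgebra.coeff_add, Finsupp.add_apply]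
  · rw [MonoidAlgebra.coeff_add, Finsupp.add_apply, Br_apply_not_mem hg, Br_apply_not_mem hg, Br_apply_not_mem hg, add_zero]

lemma Br_smul (P : Subgroup G) (t : k) (a : MonoidAlgebra k G) :
    Br P (t • a) = t • Br P a := by
  ext g
  by_cases hg : g ∈ Subgroup.centralizer (P : Set G)
  · rw [MonoidAlgebra.coeff_smul_apply, Br_apply_mem hg, Br_apply_mem hg, MonoidAlgebra.coeff_smul_apply]
  · rw [MonoidAlgebra.coeff_smul_apply, Br_apply_not_mem hg, Br_apply_not_mem hg, smul_zero]

lemma gAct_apply (x : G) (a : MonoidAlgebra k G) (g : G) :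
    (gAct x a).coeff g = a.coeff (x⁻¹ * g * x) := by
  have hinj : Function.Injective (fun g : G => x * g * x⁻¹) := by
    intro g₁ g₂ h
    simpa using mul_left_cancel (mul_right_cancel h)
  have : g = (fun g : G => x * g * x⁻¹) (x⁻¹ * g * x) := by group
  rw [gAct, MonoidAlgebra.coeff_ofCoeff]
  conv_lhs => rw [this]
  exact Finsupp.mapDomain_apply hinj a.coeff _

lemma gAct_mul (x : G) (a b : MonoidAlgebra k G) :
    gAct x (a * b) = gAct x a * gAct x b := by
  have : (fun g : G => x * g * x⁻¹) = ⇑(MulAut.conj x) := by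
    funext g; simp [MulAut.conj_apply]
  unfold gAct
  rw [this]
  exact MonoidAlgebra.mapDomain_mul (MulAut.conj x : G →* G) a b

lemma gAct_add (x : G) (a b : MonoidAlgebra k G) :
    gAct x (a + b) = gAct x a + gAct x b := MonoidAlgebra.mapDomain_add _ a b

lemma gAct_smul (x : G) (t : k) (a : MonoidAlgebra k G) :
    gAct x (t • a) = t • gAct x a := MonoidAlgebra.mapDomain_smul _ t a

end Aux

section Aux2
variable {k G : Type*} [Field k] [Group G] [Fintype G]

lemma mul_apply_fintype (a b : MonoidAlgebra k G) (g : G) :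
    (a * b).coeff g = ∑ h : G, a.coeff h * b.coeff (h⁻¹ * g) := by
  rw [MonoidAlgebra.coeff_mul_apply_left]
  rw [Finsupp.sum_fintype]
  intro h; simp

lemma SuppIn_mul {H : Subgroup G} {a b : MonoidAlgebra k G}
    (ha : SuppIn H a) (hb : SuppIn H b) : SuppIn H (a * b) := by
  intro g hg
  rw [mul_apply_fintype] at hg
  obtain ⟨h, hh⟩ := Finset.exists_ne_zero_of_sum_ne_zero hg
  have h1 : a.coeff h ≠ 0 := fun h0 => hh.2 (by rw [h0, zero_mul])
  have h2 : b.coeff (h⁻¹ * g) ≠ 0 := fun h0 => hh.2 (by rw [h0, mul_zero])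
  have := H.mul_mem (ha h h1) (hb _ h2)
  simpa using this

lemma conj_mem_centralizer {P : Subgroup G} {g x : G} (hg : g ∈ Subgroup.centralizer (P : Set G))
    (hx : x ∈ P) : x * g * x⁻¹ ∈ Subgroup.centralizer (P : Set G) := by
  rw [Subgroup.mem_centralizer_iff] at hg ⊢
  intro h hh
  have h1 : (x⁻¹ * h * x) * g = g * (x⁻¹ * h * x) :=
    hg _ (by exact P.mul_mem (P.mul_mem (P.inv_mem hx) hh) hx)
  calc h * (x * g * x⁻¹) = x * ((x⁻¹ * h * x) * g) * x⁻¹ := by group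
    _ = x * (g * (x⁻¹ * h * x)) * x⁻¹ := by rw [h1]
    _ = x * g * x⁻¹ * h := by group

/-- an element of the centralizer is fixed by conjugation from `P`. -/
lemma conj_eq_of_mem_centralizer {P : Subgroup G} {g x : G}
    (hg : g ∈ Subgroup.centralizer (P : Set G)) (hx : x ∈ P) : x⁻¹ * g * x = g := by
  rw [Subgroup.mem_centralizer_iff] at hg
  have h := hg x hx
  calc x⁻¹ * g * x = x⁻¹ * (x * g) := by rw [mul_assoc, ← h]
    _ = g := by group

/-- anything supported in the centralizer of `P` is `P`-fixed. -/
lemma fixed_of_suppIn_centralizer {P : Subgroup G} {a : MonoidAlgebra k G}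
    (ha : SuppIn (Subgroup.centralizer (P : Set G)) a) : ∀ x ∈ P, gAct x a = a := by
  intro x hx
  ext g
  rw [gAct_apply]
  by_cases hg : g ∈ Subgroup.centralizer (P : Set G)
  · rw [conj_eq_of_mem_centralizer hg hx]
  · have h1 : a.coeff g = 0 := by_contra fun h => hg (ha g h)
    have h2 : a.coeff (x⁻¹ * g * x) = 0 := by
      by_contra h
      have := ha _ h
      have := conj_mem_centralizer this hx
      have hgg : x * (x⁻¹ * g * x) * x⁻¹ = g := by group
      rw [hgg] at this
      exact hg this
    rw [h1, h2]

end Aux2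

section Orbit

/-- type synonym for `↥P` acting on `G` by conjugation. -/
def ConjP {G : Type*} [Group G] (P : Subgroup G) : Type _ := ↥P

variable {G : Type*} [Group G] {P : Subgroup G}

instance : Group (ConjP P) := inferInstanceAs (Group ↥P)
noncomputable instance [Fintype G] : Fintype (ConjP P) :=
  @Fintype.ofFinite _ (inferInstanceAs (Finite ↥P))

def ConjP.val (x : ConjP P) : G := Subtype.val (x : ↥P)

instance : MulAction (ConjP P) G where
  smul x g := ConjP.val x * g * (ConjP.val x)⁻¹
  one_smul g := by
    show ConjP.val 1 * g * (ConjP.val 1)⁻¹ = g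
    have : ConjP.val (1 : ConjP P) = (1 : G) := rfl
    rw [this]; group
  mul_smul x y g := by
    show ConjP.val (x * y) * g * (ConjP.val (x * y))⁻¹ =
      ConjP.val x * (ConjP.val y * g * (ConjP.val y)⁻¹) * (ConjP.val x)⁻¹
    have : ConjP.val (x * y) = ConjP.val x * ConjP.val y := rfl
    rw [this]; group

lemma ConjP.smul_def (x : ConjP P) (g : G) : x • g = ConjP.val x * g * (ConjP.val x)⁻¹ := rfl

lemma ConjP.val_mem (x : ConjP P) : ConjP.val x ∈ P := (x : ↥P).2

lemma sum_conj_orbits_eq_zero {p : ℕ} [Fact p.Prime] {k : Type*} [Field k] [CharP k p]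
    [Fintype G] (hP : IsPGroup p ↥P) (F : G → k) (s : Finset G)
    (hstab : ∀ h ∈ s, ∀ x : ConjP P, x • h ∈ s)
    (hnc : ∀ h ∈ s, h ∉ Subgroup.centralizer (P : Set G))
    (hF : ∀ (h : G) (x : ConjP P), F (x • h) = F h) :
    ∑ h ∈ s, F h = 0 := by
  classical
  obtain ⟨n, hn⟩ : ∃ n, Nat.card (ConjP P) = p ^ n :=
    (IsPGroup.iff_card (p := p) (G := ↥P)).mp hP
  suffices H : ∀ c : ℕ, ∀ s : Finset G, s.card = c →
      (∀ h ∈ s, ∀ x : ConjP P, x • h ∈ s) →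
      (∀ h ∈ s, h ∉ Subgroup.centralizer (P : Set G)) → ∑ h ∈ s, F h = 0 by
    exact H s.card s rfl hstab hnc
  intro c
  induction c using Nat.strong_induction_on with
  | _ c ih =>
  intro s hs hstab hnc
  rcases Finset.eq_empty_or_nonempty s with rfl | ⟨h₀, hh₀⟩
  · simp
  · have horb : (MulAction.orbit (ConjP P) h₀).Finite := Set.toFinite _
    set O : Finset G := horb.toFinset with hO
    have hmemO : ∀ {h : G}, h ∈ O ↔ h ∈ MulAction.orbit (ConjP P) h₀ := by
      intro h; rw [hO, Set.Finite.mem_toFinset]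
    have hOsub : O ⊆ s := by
      intro h hh
      obtain ⟨x, hx⟩ := hmemO.mp hh
      rw [← hx]; exact hstab h₀ hh₀ x
    have hh₀O : h₀ ∈ O := hmemO.mpr (MulAction.mem_orbit_self h₀)
    have hconst : ∀ h ∈ O, F h = F h₀ := by
      intro h hh
      obtain ⟨x, hx⟩ := hmemO.mp hh
      have hx' : x • h₀ = h := hx
      rw [← hx', hF]
    have hsumO : ∑ h ∈ O, F h = (O.card : k) * F h₀ := by
      calc ∑ h ∈ O, F h = ∑ _h ∈ O, F h₀ := Finset.sum_congr rfl hconst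
        _ = (O.card : k) * F h₀ := by rw [Finset.sum_const, nsmul_eq_mul]
    have hdvd : p ∣ O.card := by
      have hfin : Fintype (MulAction.orbit (ConjP P) h₀) := horb.fintype
      have hOS := MulAction.card_orbit_mul_card_stabilizer_eq_card_group (ConjP P) h₀
      have hcard' : O.card = Fintype.card (MulAction.orbit (ConjP P) h₀) := by
        rw [hO, Set.Finite.card_toFinset]
      have hdvd' : O.card ∣ p ^ n := by
        rw [hcard', ← hn, Nat.card_eq_fintype_card, ← hOS]
        exact Dvd.intro _ rfl
      obtain ⟨m, hm, hOm⟩ := (Nat.dvd_prime_pow (Fact.out : p.Prime)).mp hdvd'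
      rcases Nat.eq_zero_or_pos m with rfl | hmpos
      · exfalso
        have h1 : O.card = 1 := by simpa using hOm
        have hfix : ∀ x : ConjP P, x • h₀ = h₀ := by
          intro x
          have hx : x • h₀ ∈ O := hmemO.mpr (MulAction.mem_orbit _ _)
          obtain ⟨y, hy⟩ := Finset.card_eq_one.mp h1
          rw [hy, Finset.mem_singleton] at hx
          rw [hy, Finset.mem_singleton] at hh₀O
          rw [hx, hh₀O]
        apply hnc h₀ hh₀
        rw [Subgroup.mem_centralizer_iff]
        intro z hz
        have hz' := hfix ⟨z, hz⟩
        change ConjP.val (⟨z, hz⟩ : ConjP P) * h₀ * (ConjP.val (⟨z, hz⟩ : ConjP P))⁻¹ = h₀ at hz'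
        have hv : ConjP.val (⟨z, hz⟩ : ConjP P) = z := rfl
        rw [hv] at hz'
        calc z * h₀ = (z * h₀ * z⁻¹) * z := by group
          _ = h₀ * z := by rw [hz']
      · rw [hOm]
        exact dvd_pow_self p hmpos.ne'
    have hOzero : ∑ h ∈ O, F h = 0 := by
      rw [hsumO, (CharP.cast_eq_zero_iff k p O.card).mpr hdvd, zero_mul]
    have hsplit : ∑ h ∈ s, F h = ∑ h ∈ s \ O, F h + ∑ h ∈ O, F h :=
      (Finset.sum_sdiff hOsub).symm
    have hrec : ∑ h ∈ s \ O, F h = 0 := by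
      have hcardlt : (s \ O).card < c := by
        rw [← hs]
        exact Finset.card_lt_card (Finset.sdiff_ssubset hOsub ⟨h₀, hh₀O⟩)
      refine ih _ hcardlt _ rfl ?_ ?_
      · intro h hh x
        rw [Finset.mem_sdiff] at hh ⊢
        refine ⟨hstab h hh.1 x, fun hmem => hh.2 ?_⟩
        obtain ⟨y, hy⟩ := hmemO.mp hmem
        have hy' : y • h₀ = x • h := hy
        have hxy : ((x⁻¹ * y : ConjP P)) • h₀ = h := by
          rw [mul_smul, hy', inv_smul_smul]
        exact hmemO.mpr ⟨x⁻¹ * y, hxy⟩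
      · intro h hh
        exact hnc h (Finset.mem_sdiff.mp hh).1
    rw [hsplit, hrec, hOzero, add_zero]

end Orbit

section BrMul
variable {p : ℕ} [Fact p.Prime] {k G : Type*} [Field k] [CharP k p] [Group G] [Fintype G]
  {P : Subgroup G}

lemma fixed_apply_conj {a : MonoidAlgebra k G} (ha : ∀ x ∈ P, gAct x a = a)
    {x : G} (hx : x ∈ P) (h : G) : a.coeff (x * h * x⁻¹) = a.coeff h := by
  have := ha x hx
  calc a.coeff (x * h * x⁻¹) = (gAct x a).coeff (x * h * x⁻¹) := by rw [this]
    _ = a.coeff (x⁻¹ * (x * h * x⁻¹) * x) := gAct_apply x a _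
    _ = a.coeff h := by group

/-- Brauer homomorphism is multiplicative on `P`-fixed elements. -/
lemma Br_mul (hP : IsPGroup p ↥P) {a b : MonoidAlgebra k G}
    (ha : ∀ x ∈ P, gAct x a = a) (hb : ∀ x ∈ P, gAct x b = b) :
    Br P (a * b) = Br P a * Br P b := by
  classical
  set C := Subgroup.centralizer (P : Set G) with hC
  ext g
  by_cases hg : g ∈ C
  · rw [Br_apply_mem hg, mul_apply_fintype, mul_apply_fintype]
    -- RHS sum: only h ∈ C contribute
    have hRHS : ∑ h : G, (Br P a).coeff h * (Br P b).coeff (h⁻¹ * g) =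
        ∑ h ∈ Finset.univ.filter (· ∈ C), a.coeff h * b.coeff (h⁻¹ * g) := by
      rw [Finset.sum_filter]
      apply Finset.sum_congr rfl
      intro h _
      by_cases hh : h ∈ C
      · rw [if_pos hh, Br_apply_mem hh, Br_apply_mem (C.mul_mem (C.inv_mem hh) hg)]
      · rw [if_neg hh, Br_apply_not_mem hh, zero_mul]
    rw [hRHS]
    have hsplit : ∑ h : G, a.coeff h * b.coeff (h⁻¹ * g) =
        ∑ h ∈ Finset.univ.filter (· ∈ C), a.coeff h * b.coeff (h⁻¹ * g) +
        ∑ h ∈ Finset.univ.filter (· ∉ C), a.coeff h * b.coeff (h⁻¹ * g) := by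
      rw [← Finset.sum_filter_add_sum_filter_not Finset.univ (· ∈ C)]
    have hzero : ∑ h ∈ Finset.univ.filter (· ∉ C), a.coeff h * b.coeff (h⁻¹ * g) = 0 := by
      apply sum_conj_orbits_eq_zero hP (fun h => a.coeff h * b.coeff (h⁻¹ * g))
      · intro h hh x
        rw [Finset.mem_filter] at hh ⊢
        refine ⟨Finset.mem_univ _, fun hmem => hh.2 ?_⟩
        have hx := ConjP.val_mem x
        rw [ConjP.smul_def] at hmem
        have : ConjP.val x⁻¹ * (ConjP.val x * h * (ConjP.val x)⁻¹) * (ConjP.val x⁻¹)⁻¹ = h := by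
          have hv : ConjP.val (x⁻¹) = (ConjP.val x)⁻¹ := rfl
          rw [hv]; group
    -- h = x⁻¹ • (x • h)
        rw [← this]
        exact conj_mem_centralizer hmem (P.inv_mem hx)
      · intro h hh
        exact (Finset.mem_filter.mp hh).2
      · intro h x
        rw [ConjP.smul_def]
        have hx := ConjP.val_mem x
        set z := ConjP.val x
        have h1 : a.coeff (z * h * z⁻¹) = a.coeff h := fixed_apply_conj ha hx h
        have h2 : b.coeff ((z * h * z⁻¹)⁻¹ * g) = b.coeff (h⁻¹ * g) := by
          have hgz : z⁻¹ * g = g * z⁻¹ := by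
            rw [Subgroup.mem_centralizer_iff] at hg
            have := hg z hx
            calc z⁻¹ * g = z⁻¹ * g * z * z⁻¹ := by group
              _ = z⁻¹ * (z * g) * z⁻¹ := by rw [mul_assoc z⁻¹ g z, ← this]
              _ = g * z⁻¹ := by group
          have : (z * h * z⁻¹)⁻¹ * g = z * (h⁻¹ * g) * z⁻¹ := by
            rw [mul_inv_rev, mul_inv_rev, inv_inv]
            calc z * (h⁻¹ * z⁻¹) * g = z * h⁻¹ * (z⁻¹ * g) := by group
              _ = z * h⁻¹ * (g * z⁻¹) := by rw [hgz]
              _ = z * (h⁻¹ * g) * z⁻¹ := by group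
          rw [this]
          exact fixed_apply_conj hb hx _
        rw [h1, h2]
    rw [hsplit, hzero, add_zero]
  · rw [Br_apply_not_mem hg]
    have h1 : SuppIn C (Br P a * Br P b) := SuppIn_mul (SuppIn_Br P a) (SuppIn_Br P b)
    exact ((by_contra fun h => hg (h1 g h)) : (Br P a * Br P b).coeff g = 0).symm

end BrMul

section Blocks
variable {k G : Type*} [Field k] [Group G] [Fintype G]

lemma SuppIn_sub {H : Subgroup G} {a b : MonoidAlgebra k G}
    (ha : SuppIn H a) (hb : SuppIn H b) : SuppIn H (a - b) := by
  intro g hg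
  rw [MonoidAlgebra.coeff_sub, Finsupp.sub_apply] at hg
  by_cases h1 : a.coeff g = 0
  · exact hb g (fun h2 => hg (by rw [h1, h2, sub_zero]))
  · exact ha g h1

lemma blocks_eq_or_orthogonal {H : Subgroup G} {f f' : MonoidAlgebra k G}
    (hf : IsBlockOf H f) (hf' : IsBlockOf H f') : f = f' ∨ f * f' = 0 := by
  obtain ⟨hfs, hfc, hfi, hfn, hfp⟩ := hf
  obtain ⟨hf's, hf'c, hf'i, hf'n, hf'p⟩ := hf'
  by_cases h0 : f * f' = 0
  · exact Or.inr h0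
  left
  have hcomm : f' * f = f * f' := hfc f' hf's
  have hsupp : SuppIn H (f * f') := SuppIn_mul hfs hf's
  have hidem : IsIdempotentElem (f * f') := by
    show f * f' * (f * f') = f * f'
    calc f * f' * (f * f') = f * (f' * f) * f' := by noncomm_ring
      _ = f * (f * f') * f' := by rw [hcomm]
      _ = (f * f) * (f' * f') := by noncomm_ring
      _ = f * f' := by rw [hfi, hf'i]
  have hcent : ∀ a, SuppIn H a → a * (f * f') = (f * f') * a := by
    intro a ha
    calc a * (f * f') = (a * f) * f' := by rw [mul_assoc]
      _ = (f * a) * f' := by rw [hfc a ha]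
      _ = f * (a * f') := by rw [mul_assoc]
      _ = f * (f' * a) := by rw [hf'c a ha]
      _ = (f * f') * a := by rw [mul_assoc]
  -- f = f * f'
  have key : ∀ (e : MonoidAlgebra k G), SuppIn H e → (∀ a, SuppIn H a → a * e = e * a) →
      IsIdempotentElem e → e ≠ 0 →
      (∀ c₁ c₂ : MonoidAlgebra k G, SuppIn H c₁ → SuppIn H c₂ →
        (∀ a, SuppIn H a → a * c₁ = c₁ * a) → (∀ a, SuppIn H a → a * c₂ = c₂ * a) →
        IsIdempotentElem c₁ → IsIdempotentElem c₂ → c₁ * c₂ = 0 → e = c₁ + c₂ →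
          c₁ = 0 ∨ c₂ = 0) →
      e * (f * f') = f * f' → (f * f') * e = f * f' → e = f * f' := by
    intro e hes hec hei hen hep habs hobs
    have hc₂s : SuppIn H (e - f * f') := SuppIn_sub hes hsupp
    have hc₂c : ∀ a, SuppIn H a → a * (e - f * f') = (e - f * f') * a := by
      intro a ha
      rw [mul_sub, sub_mul, hec a ha, hcent a ha]
    have hc₂i : IsIdempotentElem (e - f * f') := by
      show (e - f * f') * (e - f * f') = e - f * f'
      rw [mul_sub, sub_mul, sub_mul, hei, habs, hobs, hidem]
      abel
    have horth : (f * f') * (e - f * f') = 0 := by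
      rw [mul_sub, hobs, hidem, sub_self]
    have hsum : e = f * f' + (e - f * f') := by abel
    rcases hep (f * f') (e - f * f') hsupp hc₂s hcent hc₂c hidem hc₂i horth hsum with h | h
    · exact absurd h h0
    · exact sub_eq_zero.mp h
  have h1 : f = f * f' := by
    apply key f hfs hfc hfi hfn hfp
    · calc f * (f * f') = (f * f) * f' := by rw [mul_assoc]
        _ = f * f' := by rw [hfi]
    · calc (f * f') * f = f * (f' * f) := by rw [mul_assoc]
        _ = f * (f * f') := by rw [hcomm]
        _ = (f * f) * f' := by rw [mul_assoc]
        _ = f * f' := by rw [hfi]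
  have h2 : f' = f * f' := by
    apply key f' hf's hf'c hf'i hf'n hf'p
    · calc f' * (f * f') = (f' * f) * f' := by rw [mul_assoc]
        _ = (f * f') * f' := by rw [hcomm]
        _ = f * (f' * f') := by rw [mul_assoc]
        _ = f * f' := by rw [hf'i]
    · calc (f * f') * f' = f * (f' * f') := by rw [mul_assoc]
        _ = f * f' := by rw [hf'i]
  rw [h1, ← h2]

end Blocks

section Fitting
open Polynomial
variable {k : Type*} [Field k]

lemma exists_pow_factor (μ : Polynomial k) (hμ : μ ≠ 0) :
    ∃ m g, μ = Polynomial.X ^ m * g ∧ Polynomial.coeff g 0 ≠ 0 := by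
  suffices H : ∀ d : ℕ, ∀ μ : Polynomial k, μ ≠ 0 → μ.natDegree = d →
      ∃ m g, μ = Polynomial.X ^ m * g ∧ Polynomial.coeff g 0 ≠ 0 by
    exact H μ.natDegree μ hμ rfl
  intro d
  induction d using Nat.strong_induction_on with
  | _ d ih =>
  intro μ hμ hd
  by_cases h0 : μ.coeff 0 = 0
  · obtain ⟨ν, hν⟩ := Polynomial.X_dvd_iff.mpr h0
    have hν0 : ν ≠ 0 := by rintro rfl; rw [mul_zero] at hν; exact hμ hν
    have hdeg : ν.natDegree < d := by
      rw [← hd, hν, Polynomial.natDegree_mul Polynomial.X_ne_zero hν0,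
        Polynomial.natDegree_X]
      omega
    obtain ⟨m, g, hg, hg0⟩ := ih _ hdeg ν hν0 rfl
    exact ⟨m + 1, g, by rw [hν, hg, pow_succ]; ring, hg0⟩
  · exact ⟨0, μ, by rw [pow_zero, one_mul], h0⟩

variable {A : Type*} [Ring A] [Algebra k A]

lemma aeval_mem_span_pow (a : A) {q : Polynomial k} (hq : q.coeff 0 = 0) :
    Polynomial.aeval a q ∈ Submodule.span k {x : A | ∃ n : ℕ, x = a ^ (n + 1)} := by
  rw [Polynomial.aeval_eq_sum_range]
  apply Submodule.sum_mem
  intro i hi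
  rcases i with _ | n
  · rw [hq]; simpa using Submodule.zero_mem _
  · exact Submodule.smul_mem _ _ (Submodule.subset_span ⟨n, rfl⟩)

lemma exists_fitting [Module.Finite k A] (a : A) :
    ∃ q : Polynomial k, q.coeff 0 = 0 ∧ IsIdempotentElem (Polynomial.aeval a q) ∧
      ∃ N : ℕ, a ^ (N + 1) = Polynomial.aeval a q * a ^ (N + 1) := by
  have hint : IsIntegral k a := IsIntegral.of_finite k a
  have hμ0 : minpoly k a ≠ 0 := minpoly.ne_zero hint
  have haev : Polynomial.aeval a (minpoly k a) = 0 := minpoly.aeval k a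
  obtain ⟨m, g, hfac, hg0⟩ := exists_pow_factor (minpoly k a) hμ0
  have hgev : Polynomial.aeval a (Polynomial.X ^ m * g) = 0 := by rw [← hfac]; exact haev
  rcases Nat.eq_zero_or_pos m with rfl | hm
  · -- c = 1
    refine ⟨Polynomial.C (g.coeff 0)⁻¹ * (Polynomial.C (g.coeff 0) - g), ?_, ?_, 0, ?_⟩
    · rw [Polynomial.mul_coeff_zero]
      simp
    · have hone : Polynomial.aeval a (Polynomial.C (g.coeff 0)⁻¹ *
          (Polynomial.C (g.coeff 0) - g)) = 1 := by
        have hga : Polynomial.aeval a g = 0 := by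
          rw [pow_zero, one_mul] at hgev; exact hgev
        rw [map_mul, map_sub, hga, sub_zero, Polynomial.aeval_C, Polynomial.aeval_C,
          ← map_mul, inv_mul_cancel₀ hg0, map_one]
      rw [hone]
      exact IsIdempotentElem.one
    · have hone : Polynomial.aeval a (Polynomial.C (g.coeff 0)⁻¹ *
          (Polynomial.C (g.coeff 0) - g)) = 1 := by
        have hga : Polynomial.aeval a g = 0 := by
          rw [pow_zero, one_mul] at hgev; exact hgev
        rw [map_mul, map_sub, hga, sub_zero, Polynomial.aeval_C, Polynomial.aeval_C,
          ← map_mul, inv_mul_cancel₀ hg0, map_one]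
      rw [hone, one_mul]
  · -- m ≥ 1
    have hgev' : Polynomial.aeval (R := k) a (Polynomial.X ^ m) * Polynomial.aeval a g = 0 := by
      rw [← map_mul (Polynomial.aeval (R := k) a) (Polynomial.X ^ m) g]; exact hgev
    have hcop : IsCoprime (Polynomial.X ^ m : Polynomial k) g := by
      apply IsCoprime.pow_left
      obtain ⟨h, hh⟩ : (Polynomial.X : Polynomial k) ∣ g - Polynomial.C (g.coeff 0) := by
        rw [Polynomial.X_dvd_iff]; simp
      refine ⟨-(Polynomial.C (g.coeff 0)⁻¹ * h), Polynomial.C (g.coeff 0)⁻¹, ?_⟩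
      have hCC : (Polynomial.C (g.coeff 0)⁻¹ : Polynomial k) * Polynomial.C (g.coeff 0) = 1 := by
        rw [← map_mul, inv_mul_cancel₀ hg0, map_one]
      linear_combination Polynomial.C (g.coeff 0)⁻¹ * hh + hCC
    obtain ⟨u, v, huv⟩ := hcop
    refine ⟨u * Polynomial.X ^ m, ?_, ?_, m - 1, ?_⟩
    · rw [Polynomial.mul_coeff_zero, Polynomial.coeff_X_pow, if_neg (by omega), mul_zero]
    · show Polynomial.aeval a (u * Polynomial.X ^ m) * Polynomial.aeval a (u * Polynomial.X ^ m)
        = Polynomial.aeval a (u * Polynomial.X ^ m)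
      have hqq : (u * Polynomial.X ^ m) * (u * Polynomial.X ^ m) - u * Polynomial.X ^ m
          = -(u * v * (Polynomial.X ^ m * g)) := by
        linear_combination (u * Polynomial.X ^ m) * huv
      have h1 := congrArg (Polynomial.aeval a) hqq
      simp only [map_sub, map_mul, map_neg] at h1
      rw [hgev', mul_zero, neg_zero] at h1
      simp only [map_mul]
      exact sub_eq_zero.mp h1
    · have hNrel : Polynomial.X ^ m - (u * Polynomial.X ^ m) * Polynomial.X ^ m
          = v * (Polynomial.X ^ m * g) := by
        linear_combination (-(Polynomial.X ^ m : Polynomial k)) * huv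
      have h1 := congrArg (Polynomial.aeval a) hNrel
      simp only [map_sub, map_mul] at h1
      rw [hgev', mul_zero] at h1
      have hmm : m - 1 + 1 = m := Nat.succ_pred_eq_of_pos hm
      rw [hmm]
      have hXm : Polynomial.aeval (R := k) a (Polynomial.X ^ m) = a ^ m := by simp
      rw [hXm] at h1
      simp only [map_mul, hXm]
      exact sub_eq_zero.mp h1
end Fitting

section MoreAux
variable {k G : Type*} [Field k] [Group G]

lemma gAct_zero (x : G) : gAct x (0 : MonoidAlgebra k G) = 0 := MonoidAlgebra.mapDomain_zero _

lemma gAct_sub (x : G) (a b : MonoidAlgebra k G) :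
    gAct x (a - b) = gAct x a - gAct x b := by
  have h := gAct_add x (a - b) b
  rw [sub_add_cancel] at h
  rw [h]; abel

lemma Br_zero (P : Subgroup G) : Br P (0 : MonoidAlgebra k G) = 0 := by
  have h := Br_smul P (0 : k) (0 : MonoidAlgebra k G)
  simpa using h

end MoreAux

section LemmaA
variable {p : ℕ} [Fact p.Prime] {k G : Type*} [Field k] [CharP k p] [Group G] [Fintype G]
  {P : Subgroup G}

lemma assoc_of_ne_zero (hP : IsPGroup p ↥P) {e i : MonoidAlgebra k G}
    (he : IsBlockOf (Subgroup.centralizer (P : Set G)) e)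
    (hi : IsPrimIdemFixed P i)
    (hne : Br P i * e ≠ 0) : e * Br P i = Br P i ∧ Br P i ≠ 0 := by
  classical
  obtain ⟨hes, hec, hei, hen, hep⟩ := he
  obtain ⟨hif, hii, hin, hipr⟩ := hi
  have hef : ∀ x ∈ P, gAct x e = e := fixed_of_suppIn_centralizer hes
  have hBre : Br P e = e := Br_of_suppIn hes
  have hBriC : SuppIn (Subgroup.centralizer (P : Set G)) (Br P i) := SuppIn_Br P i
  have hcomm : Br P i * e = e * Br P i := hec (Br P i) hBriC
  have hBrii : IsIdempotentElem (Br P i) := by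
    show Br P i * Br P i = Br P i
    rw [← Br_mul hP hif hif, hii]
  set a := i * e * i with ha
  have hief : ∀ x ∈ P, gAct x (i * e) = i * e := fun x hx => by
    rw [gAct_mul, hif x hx, hef x hx]
  have haf : ∀ x ∈ P, gAct x a = a := fun x hx => by
    rw [ha, gAct_mul, hief x hx, hif x hx]
  set ebar := Br P i * e with hebar
  have hBra : Br P a = ebar := by
    rw [ha, Br_mul hP hief hif, Br_mul hP hif hef, hBre, hebar]
    calc Br P i * e * Br P i = Br P i * Br P i * e := by
          rw [mul_assoc, ← hcomm, ← mul_assoc]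
      _ = Br P i * e := by rw [hBrii]
  have hebari : IsIdempotentElem ebar := by
    show ebar * ebar = ebar
    rw [hebar]
    calc Br P i * e * (Br P i * e) = Br P i * (e * Br P i) * e := by noncomm_ring
      _ = Br P i * (Br P i * e) * e := by rw [← hcomm]
      _ = (Br P i * Br P i) * (e * e) := by noncomm_ring
      _ = Br P i * e := by rw [hBrii, hei]
  have hafpow : ∀ n : ℕ, ∀ x ∈ P, gAct x (a ^ (n + 1)) = a ^ (n + 1) := by
    intro n; induction n with
    | zero => simpa using haf
    | succ n ihn => intro x hx; rw [pow_succ, gAct_mul, ihn x hx, haf x hx]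
  have hBrapow : ∀ n : ℕ, Br P (a ^ (n + 1)) = ebar := by
    intro n; induction n with
    | zero => simpa using hBra
    | succ n ihn => rw [pow_succ, Br_mul hP (hafpow n) haf, ihn, hBra, hebari]
  have hebne : ebar ≠ 0 := hne
  have hia : i * a = a := by rw [ha, ← mul_assoc, ← mul_assoc, hii]
  have hai : a * i = a := by rw [ha, mul_assoc, mul_assoc, hii, ← mul_assoc]
  set M := Submodule.span k {x : MonoidAlgebra k G | ∃ n : ℕ, x = a ^ (n + 1)} with hM
  have hspan : ∀ s ∈ M, i * s = s ∧ s * i = s ∧ (∀ x ∈ P, gAct x s = s) ∧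
      ∃ t : k, Br P s = t • ebar := by
    intro s hs
    refine Submodule.span_induction ?_ ?_ ?_ ?_ hs
    · rintro x ⟨n, rfl⟩
      refine ⟨?_, ?_, hafpow n, 1, by rw [hBrapow n, one_smul]⟩
      · rw [pow_succ', ← mul_assoc, hia]
      · rw [pow_succ, mul_assoc, hai]
    · exact ⟨mul_zero i, zero_mul i, fun x _ => gAct_zero x, 0, by rw [Br_zero, zero_smul]⟩
    · rintro s₁ s₂ _ _ ⟨h1, h2, h3, t1, h4⟩ ⟨h5, h6, h7, t2, h8⟩
      exact ⟨by rw [mul_add, h1, h5], by rw [add_mul, h2, h6],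
        fun x hx => by rw [gAct_add, h3 x hx, h7 x hx],
        t1 + t2, by rw [Br_add, h4, h8, add_smul]⟩
    · rintro r s₁ _ ⟨h1, h2, h3, t1, h4⟩
      exact ⟨by rw [mul_smul_comm, h1], by rw [smul_mul_assoc, h2],
        fun x hx => by rw [gAct_smul, h3 x hx],
        r * t1, by rw [Br_smul, h4, smul_smul]⟩
  letI : Module.Finite k (MonoidAlgebra k G) :=
    inferInstance
  obtain ⟨q, hq0, hqi, N, hqN⟩ := exists_fitting (k := k) a
  set c := Polynomial.aeval a q with hc
  have hcM : c ∈ M := aeval_mem_span_pow a hq0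
  obtain ⟨hic, hci, hcf, t, hBrc⟩ := hspan c hcM
  have hcc : c * c = c := hqi
  have hic' : IsIdempotentElem (i - c) := by
    show (i - c) * (i - c) = i - c
    rw [mul_sub, sub_mul, sub_mul, hii, hic, hci, hcc]
    abel
  have ho1 : c * (i - c) = 0 := by rw [mul_sub, hci, hcc, sub_self]
  have ho2 : (i - c) * c = 0 := by rw [sub_mul, hic, hcc, sub_self]
  have hfix2 : ∀ x ∈ P, gAct x (i - c) = i - c := fun x hx => by
    rw [gAct_sub, hif x hx, hcf x hx]
  rcases hipr c (i - c) hcf hfix2 hqi hic' ho1 ho2 (by abel) with hc0 | hic0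
  · exfalso
    have hz : a ^ (N + 1) = 0 := by rw [hqN, hc0, zero_mul]
    exact hebne (by rw [← hBrapow N, hz, Br_zero])
  · have hieq : i = c := by
      have := sub_eq_zero.mp hic0
      exact this
    have hBri : Br P i = t • ebar := by rw [hieq, hBrc]
    have hBrine : Br P i ≠ 0 := fun h0 => hebne (by rw [hebar, h0, zero_mul])
    have ht : t = 1 := by
      have h1 : ebar * e = ebar := by rw [hebar, mul_assoc, hei]
      have h2 : ebar = t • ebar := by
        calc ebar = Br P i * e := hebar
          _ = (t • ebar) * e := by rw [← hBri]
          _ = t • (ebar * e) := smul_mul_assoc t ebar e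
          _ = t • ebar := by rw [h1]
      have h3 : (1 - t) • ebar = 0 := by rw [sub_smul, one_smul, ← h2, sub_self]
      rcases smul_eq_zero.mp h3 with h | h
      · have : (1 : k) = t := by
          have := sub_eq_zero.mp h
          exact this
        exact this.symm
      · exact absurd h hebne
    refine ⟨?_, hBrine⟩
    calc e * Br P i = Br P i * e := hcomm.symm
      _ = ebar := hebar.symm
      _ = Br P i := by rw [hBri, ht, one_smul]

end LemmaA

/-- Let `Q ≤ P` be `p`-subgroups of `G`, `e` a block idempotent of `kC_G(P)` and
`f` a block idempotent of `kC_G(Q)`. Assume (as given by the uniqueness theorem for Brauer pairs)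
that there is a unique block idempotent `f'` of `kC_G(Q)` with `(Q,f') ≤ (P,e)`. If some primitive
idempotent `i` of `(kG)^P` satisfies `Br_P(i)e ≠ 0` and `Br_Q(i)f ≠ 0`, then every primitive
idempotent `j` of `(kG)^P` with `Br_P(j)e ≠ 0` satisfies `Br_Q(j)f ≠ 0`. -/
theorem brauer_pair_condition_vi_implies_iv
    (p : ℕ) [Fact p.Prime] (k : Type*) [Field k] [CharP k p]
    (G : Type*) [Group G] [Fintype G]
    (b : MonoidAlgebra k G) (hb : IsBlockOf (⊤ : Subgroup G) b)
    (Q P : Subgroup G) (hQP : Q ≤ P) (hQ : IsPGroup p ↥Q) (hP : IsPGroup p ↥P)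
    (f : MonoidAlgebra k G) (hf : IsBlockOf (Subgroup.centralizer (Q : Set G)) f)
    (e : MonoidAlgebra k G) (he : IsBlockOf (Subgroup.centralizer (P : Set G)) e)
    (huniq : ∃! f' : MonoidAlgebra k G,
      IsBlockOf (Subgroup.centralizer (Q : Set G)) f' ∧ BrauerLE Q f' P e)
    (hexists : ∃ i : MonoidAlgebra k G, IsPrimIdemFixed P i ∧
      Br P i * e ≠ 0 ∧ Br Q i * f ≠ 0) :
    ∀ j : MonoidAlgebra k G, IsPrimIdemFixed P j → Br P j * e ≠ 0 → Br Q j * f ≠ 0 := by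
  obtain ⟨i, hi, hie, hif⟩ := hexists
  obtain ⟨f', ⟨hf'blk, hBLE⟩, -⟩ := huniq
  have hle := hBLE.2
  have hie' := assoc_of_ne_zero hP he hi hie
  have hi' := hle i hi hie'
  have hff' : f = f' := by
    rcases blocks_eq_or_orthogonal hf hf'blk with h | horth
    · exact h
    · exfalso
      apply hif
      have hsupp : SuppIn (Subgroup.centralizer (Q : Set G)) (Br Q i) := SuppIn_Br Q i
      calc Br Q i * f = f * Br Q i := hf.2.1 (Br Q i) hsupp
        _ = f * (f' * Br Q i) := by rw [hi'.1]
        _ = (f * f') * Br Q i := (mul_assoc f f' (Br Q i)).symm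
        _ = 0 := by rw [horth, zero_mul]
  intro j hj hje
  have hje' := assoc_of_ne_zero hP he hj hje
  have hj' := hle j hj hje'
  have hsupp : SuppIn (Subgroup.centralizer (Q : Set G)) (Br Q j) := SuppIn_Br Q j
  have hfix : Br Q j * f = Br Q j := by
    calc Br Q j * f = f * Br Q j := hf.2.1 (Br Q j) hsupp
      _ = f' * Br Q j := by rw [hff']
      _ = Br Q j := hj'.1
  rw [hfix]
  exact hj'.2
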